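/- Let τ be a transportation cost, m₁, m₂ > 0, M = m₁ + m₂, and e₁, e₂ unit vectors satisfying |τ(m₁)e₁ + τ(m₂)e₂| ≤ τ(m₁+m₂). Define ψ : [0,M] → ℝ² by ψ(s) = (τ(m₂)/m₂)e₂ for 0 ≤ s ≤ m₂ and ψ(s) = (τ(m₁)/m₁)e₁ for m₂ < s ≤ M. Then for all 0 ≤ s₁ ≤ s₂ ≤ M one has |∫_{s₁}^{s₂} ψ(s) ds| ≤ τ(s₂ - s₁). -/

import Mathlib

open MeasureTheory intervalIntegral

private lemma tau_nonneg (τ : ℝ → ℝ) (hmono : MonotoneOn τ (Set.Ici 0)) (hτ0 : τ 0 = 0)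
    {x : ℝ} (hx : 0 ≤ x) : 0 ≤ τ x := by
  have := hmono (Set.self_mem_Ici) hx hx
  linarith [hτ0 ▸ this]

private lemma tau_superhom (τ : ℝ → ℝ) (hconc : ConcaveOn ℝ (Set.Ici 0) τ) (hτ0 : τ 0 = 0)
    {x t : ℝ} (hx : 0 ≤ x) (ht0 : 0 ≤ t) (ht1 : t ≤ 1) : t * τ x ≤ τ (t * x) := by
  have := hconc.2 hx (Set.self_mem_Ici) ht0 (by linarith : (0:ℝ) ≤ 1 - t) (by ring)
  simpa [hτ0, smul_eq_mul] using this

/-- The vector field calibrating a triple junction satisfies the lifted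
integral constraint between all levels. -/
theorem triple_junction_calibration_constraint
    (τ : ℝ → ℝ) (hmono : MonotoneOn τ (Set.Ici 0))
    (hconc : ConcaveOn ℝ (Set.Ici 0) τ) (hτ0 : τ 0 = 0)
    (m₁ m₂ M : ℝ) (hm₁ : 0 < m₁) (hm₂ : 0 < m₂) (hM : M = m₁ + m₂)
    (e₁ e₂ : EuclideanSpace ℝ (Fin 2)) (he₁ : ‖e₁‖ = 1) (he₂ : ‖e₂‖ = 1)
    (hangle : ‖τ m₁ • e₁ + τ m₂ • e₂‖ ≤ τ (m₁ + m₂))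
    (ψ : ℝ → EuclideanSpace ℝ (Fin 2))
    (hψ₁ : ∀ s ∈ Set.Icc (0 : ℝ) m₂, ψ s = (τ m₂ / m₂) • e₂)
    (hψ₂ : ∀ s ∈ Set.Ioc m₂ M, ψ s = (τ m₁ / m₁) • e₁) :
    ∀ s₁ s₂ : ℝ, 0 ≤ s₁ → s₁ ≤ s₂ → s₂ ≤ M →
      ‖∫ s in s₁..s₂, ψ s‖ ≤ τ (s₂ - s₁) := by
  intro s₁ s₂ h0 h12 h2M
  have hτ1 : 0 ≤ τ m₁ := tau_nonneg τ hmono hτ0 hm₁.le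
  have hτ2 : 0 ≤ τ m₂ := tau_nonneg τ hmono hτ0 hm₂.le
  by_cases hA : s₂ ≤ m₂
  · -- both levels below m₂
    have hval : ∫ s in s₁..s₂, ψ s = (s₂ - s₁) • ((τ m₂ / m₂) • e₂) := by
      rw [intervalIntegral.integral_congr (g := fun _ => (τ m₂ / m₂) • e₂) ?_,
        intervalIntegral.integral_const]
      intro x hx
      rw [Set.uIcc_of_le h12] at hx
      exact hψ₁ x ⟨le_trans h0 hx.1, le_trans hx.2 hA⟩
    rw [hval, norm_smul, norm_smul, he₂, Real.norm_eq_abs, Real.norm_eq_abs,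
      abs_of_nonneg (div_nonneg hτ2 hm₂.le), abs_of_nonneg (by linarith : (0:ℝ) ≤ s₂ - s₁)]
    have key := tau_superhom τ hconc hτ0 hm₂.le
      (t := (s₂ - s₁) / m₂) (div_nonneg (by linarith) hm₂.le) (by rw [div_le_one hm₂]; linarith)
    have : (s₂ - s₁) / m₂ * m₂ = s₂ - s₁ := by field_simp
    rw [this] at key
    calc (s₂ - s₁) * (τ m₂ / m₂ * 1) = (s₂ - s₁) / m₂ * τ m₂ := by ring
      _ ≤ τ (s₂ - s₁) := key
  · push_neg at hA
    by_cases hB : m₂ ≤ s₁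
    · -- both levels above m₂
      have hval : ∫ s in s₁..s₂, ψ s = (s₂ - s₁) • ((τ m₁ / m₁) • e₁) := by
        rw [intervalIntegral.integral_of_le h12,
          setIntegral_congr_fun measurableSet_Ioc
            (fun x hx => hψ₂ x ⟨lt_of_le_of_lt hB hx.1, hx.2.trans h2M⟩),
          setIntegral_const, Real.volume_real_Ioc, max_eq_left (by linarith)]
      rw [hval, norm_smul, norm_smul, he₁, Real.norm_eq_abs, Real.norm_eq_abs,
        abs_of_nonneg (div_nonneg hτ1 hm₁.le), abs_of_nonneg (by linarith : (0:ℝ) ≤ s₂ - s₁)]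
      have key := tau_superhom τ hconc hτ0 hm₁.le
        (t := (s₂ - s₁) / m₁) (div_nonneg (by linarith) hm₁.le) (by rw [div_le_one hm₁]; linarith)
      have : (s₂ - s₁) / m₁ * m₁ = s₂ - s₁ := by field_simp
      rw [this] at key
      calc (s₂ - s₁) * (τ m₁ / m₁ * 1) = (s₂ - s₁) / m₁ * τ m₁ := by ring
        _ ≤ τ (s₂ - s₁) := key
    · -- s₁ < m₂ < s₂
      push_neg at hB
      have hint1 : IntervalIntegrable ψ volume s₁ m₂ := by
        rw [intervalIntegrable_iff_integrableOn_Ioc_of_le hB.le]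
        exact (integrableOn_const measure_Ioc_lt_top.ne).congr_fun
          (fun x hx => (hψ₁ x ⟨le_trans h0 hx.1.le, hx.2⟩).symm) measurableSet_Ioc
      have hint2 : IntervalIntegrable ψ volume m₂ s₂ := by
        rw [intervalIntegrable_iff_integrableOn_Ioc_of_le hA.le]
        exact (integrableOn_const measure_Ioc_lt_top.ne).congr_fun
          (fun x hx => (hψ₂ x ⟨hx.1, hx.2.trans h2M⟩).symm) measurableSet_Ioc
      have hsplit := intervalIntegral.integral_add_adjacent_intervals hint1 hint2
      have hI1 : ∫ s in s₁..m₂, ψ s = (m₂ - s₁) • ((τ m₂ / m₂) • e₂) := by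
        rw [intervalIntegral.integral_congr (g := fun _ => (τ m₂ / m₂) • e₂) ?_,
          intervalIntegral.integral_const]
        intro x hx
        rw [Set.uIcc_of_le hB.le] at hx
        exact hψ₁ x ⟨le_trans h0 hx.1, hx.2⟩
      have hI2 : ∫ s in m₂..s₂, ψ s = (s₂ - m₂) • ((τ m₁ / m₁) • e₁) := by
        rw [intervalIntegral.integral_of_le hA.le,
          setIntegral_congr_fun measurableSet_Ioc
            (fun x hx => hψ₂ x ⟨hx.1, hx.2.trans h2M⟩),
          setIntegral_const, Real.volume_real_Ioc, max_eq_left (by linarith)]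
      set A : ℝ := (m₂ - s₁) / m₂ with hAdef
      set B : ℝ := (s₂ - m₂) / m₁ with hBdef
      have hA0 : 0 ≤ A := div_nonneg (by linarith) hm₂.le
      have hB0 : 0 ≤ B := div_nonneg (by linarith) hm₁.le
      have hA1 : A ≤ 1 := by rw [hAdef, div_le_one hm₂]; linarith
      have hB1 : B ≤ 1 := by rw [hBdef, div_le_one hm₁]; linarith
      set α : ℝ := min A B with hαdef
      have hα0 : 0 ≤ α := le_min hA0 hB0
      have hαA : α ≤ A := min_le_left _ _
      have hαB : α ≤ B := min_le_right _ _
      have hw4 : 0 ≤ 1 + α - A - B := by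
        rcases min_le_iff.mp (le_refl α) with _ | _ <;>
        · rcases le_total A B with h | h
          · simp only [hαdef, min_eq_left h]; linarith
          · simp only [hαdef, min_eq_right h]; linarith
      have hIval : ∫ s in s₁..s₂, ψ s
          = α • (τ m₁ • e₁ + τ m₂ • e₂) + ((A - α) * τ m₂) • e₂ + ((B - α) * τ m₁) • e₁ := by
        rw [← hsplit, hI1, hI2]
        have h1 : (m₂ - s₁) • ((τ m₂ / m₂) • e₂) = (A * τ m₂) • e₂ := by
          rw [smul_smul]; congr 1; rw [hAdef]; field_simp
        have h2 : (s₂ - m₂) • ((τ m₁ / m₁) • e₁) = (B * τ m₁) • e₁ := by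
          rw [smul_smul]; congr 1; rw [hBdef]; field_simp
        rw [h1, h2, smul_add, smul_smul, smul_smul]
        module
      have hnorm : ‖∫ s in s₁..s₂, ψ s‖
          ≤ α * τ (m₁ + m₂) + (A - α) * τ m₂ + (B - α) * τ m₁ := by
        rw [hIval]
        refine le_trans (norm_add_le _ _) ?_
        refine add_le_add (le_trans (norm_add_le _ _) (add_le_add ?_ ?_)) ?_
        · rw [norm_smul, Real.norm_eq_abs, abs_of_nonneg hα0]
          exact mul_le_mul_of_nonneg_left hangle hα0
        · rw [norm_smul, Real.norm_eq_abs, he₂, mul_one,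
            abs_of_nonneg (mul_nonneg (by linarith) hτ2)]
        · rw [norm_smul, Real.norm_eq_abs, he₁, mul_one,
            abs_of_nonneg (mul_nonneg (by linarith) hτ1)]
      refine hnorm.trans ?_
      -- Jensen with four points
      have hjen := hconc.le_map_sum (t := Finset.univ) (w := ![α, A - α, B - α, 1 + α - A - B])
        (p := ![m₁ + m₂, m₂, m₁, 0]) ?_ ?_ ?_
      · have hsum : ∑ i, (![α, A - α, B - α, 1 + α - A - B] : Fin 4 → ℝ) i
            • (![m₁ + m₂, m₂, m₁, 0] : Fin 4 → ℝ) i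
            = α * (m₁ + m₂) + (A - α) * m₂ + (B - α) * m₁ := by
          simp [Fin.sum_univ_four]; try ring
        have harg : α * (m₁ + m₂) + (A - α) * m₂ + (B - α) * m₁ = s₂ - s₁ := by
          rw [hAdef, hBdef]; field_simp; ring
        rw [hsum, harg] at hjen
        refine le_trans ?_ hjen
        simp [Fin.sum_univ_four, hτ0]
        try ring_nf
        try rfl
        try ring
      · intro i _
        fin_cases i <;> simp [hα0, hw4] <;> linarith
      · simp [Fin.sum_univ_four]; try ring
      · intro i _
        fin_cases i <;> simp [Set.mem_Ici] <;> positivity
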